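/- Let P and Q be n × n complex matrices with n ≥ 1, let c ∈ ℝ, and let N be the 2n × 2n complex block matrix N = [[0, P], [Q, −c·I]]. Then N has an eigenvalue μ ∈ ℂ (a root of its characteristic polynomial) with real part Re(μ) ≥ −c/2. -/

import Mathlib

/-- The block matrix `N = [[0, P], [Q, -cI]]` (with `c` real, `n ≥ 1`) has an
eigenvalue with real part at least `-c/2`. -/
theorem stmt_7 {n : ℕ} (hn : 1 ≤ n) (P Q : Matrix (Fin n) (Fin n) ℂ) (c : ℝ) :
    ∃ μ : ℂ,
      (Matrix.fromBlocks 0 P Q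
          (-(c : ℂ) • (1 : Matrix (Fin n) (Fin n) ℂ))).charpoly.IsRoot μ ∧
      (-c / 2 : ℝ) ≤ μ.re := by
  set N := Matrix.fromBlocks 0 P Q (-(c : ℂ) • (1 : Matrix (Fin n) (Fin n) ℂ)) with hN
  have htr : N.trace = -(c : ℂ) * n := by
    rw [hN]
    simp [Matrix.trace, Matrix.diag, Fintype.sum_sum_type, Matrix.one_apply]
    ring
  have hsum : N.charpoly.roots.sum = -(c : ℂ) * n :=
    (Matrix.trace_eq_sum_roots_charpoly N).symm.trans htr
  have hcard : Multiset.card N.charpoly.roots = 2 * n := by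
    have hsp := IsAlgClosed.splits N.charpoly
    rw [Polynomial.splits_iff_card_roots.mp hsp, Matrix.charpoly_natDegree_eq_dim]
    simp [Fintype.card_fin, two_mul]
  by_contra h
  push_neg at h
  have hlt : ∀ x ∈ N.charpoly.roots, x.re < -c / 2 := fun x hx =>
    h x ((Polynomial.isRoot_of_mem_roots hx))
  have hne : N.charpoly.roots ≠ 0 := by
    intro h0
    rw [h0] at hcard
    simp at hcard
    omega
  have hsumre : (N.charpoly.roots.map Complex.re).sum <
      (N.charpoly.roots.map (fun _ => (-c / 2 : ℝ))).sum :=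
    Multiset.sum_lt_sum_of_nonempty hne hlt
  have hre : (N.charpoly.roots.map Complex.re).sum = -c * n := by
    have := map_multiset_sum Complex.reAddGroupHom N.charpoly.roots
    rw [hsum] at this
    simpa using this.symm
  rw [hre, Multiset.map_const', Multiset.sum_replicate, hcard, nsmul_eq_mul] at hsumre
  push_cast at hsumre
  nlinarith
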